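/- Let Ω ⊂ ℝⁿ be a bounded measurable set, let Φ : ℝⁿ → [0,∞) be an n-dimensional N-function of class C¹ with Young conjugate Φ_•, and let U : Ω → ℝⁿ be measurable with ∫_Ω Φ(U(x)) dx < ∞. Then for every ε ∈ (0,1] one has ∫_Ω Φ_•(∇Φ((1−ε)U(x))) dx < ∞. -/

import Mathlib

open MeasureTheory Filter Topology
open scoped RealInnerProductSpace ENNReal

/-- An `n`-dimensional (finite-valued) Young function: an even, convex function
`Φ : ℝⁿ → [0,∞)` with `Φ(0) = 0` such that for every `t > 0` the sublevel set
`{ξ : Φ ξ < t}` is bounded and is a neighborhood of `0`. -/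
structure IsYoungFunction {n : ℕ} (Φ : EuclideanSpace ℝ (Fin n) → ℝ) : Prop where
  nonneg : ∀ ξ, 0 ≤ Φ ξ
  even : ∀ ξ, Φ (-ξ) = Φ ξ
  convex : ConvexOn ℝ Set.univ Φ
  map_zero : Φ 0 = 0
  sublevel_bounded : ∀ t > 0, Bornology.IsBounded {ξ | Φ ξ < t}
  sublevel_mem_nhds : ∀ t > 0, {ξ | Φ ξ < t} ∈ 𝓝 (0 : EuclideanSpace ℝ (Fin n))

/-- An `n`-dimensional `N`-function: a finite-valued Young function vanishing only
at `0`, with `Φ(ξ)/|ξ| → ∞` as `|ξ| → ∞` and `Φ(ξ)/|ξ| → 0` as `|ξ| → 0`. -/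
structure IsNFunction {n : ℕ} (Φ : EuclideanSpace ℝ (Fin n) → ℝ)
    extends IsYoungFunction Φ : Prop where
  eq_zero : ∀ ξ, Φ ξ = 0 → ξ = 0
  tendsto_atTop : Tendsto (fun ξ => Φ ξ / ‖ξ‖)
    (Bornology.cobounded (EuclideanSpace ℝ (Fin n))) atTop
  tendsto_zero : Tendsto (fun ξ => Φ ξ / ‖ξ‖)
    (𝓝[≠] (0 : EuclideanSpace ℝ (Fin n))) (𝓝 0)

/-- The Young conjugate `Φ_•(η) = sup_ξ (ξ·η − Φ(ξ))`, with values in `[0,∞]`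
(the supremum is always nonnegative, since `ξ = 0` contributes `0`). -/
noncomputable def youngConj {n : ℕ} (Φ : EuclideanSpace ℝ (Fin n) → ℝ)
    (η : EuclideanSpace ℝ (Fin n)) : ℝ≥0∞ :=
  ⨆ ξ : EuclideanSpace ℝ (Fin n), ENNReal.ofReal (⟪ξ, η⟫ - Φ ξ)


section Aux

variable {E : Type*} [NormedAddCommGroup E] [InnerProductSpace ℝ E] [CompleteSpace E]

/-- Gradient inequality for a differentiable convex function. -/
lemma convex_gradient_ineq {Φ : E → ℝ} (hconv : ConvexOn ℝ Set.univ Φ)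
    (hd : Differentiable ℝ Φ) (x y : E) :
    ⟪gradient Φ x, y - x⟫ ≤ Φ y - Φ x := by
  set c : ℝ →ᵃ[ℝ] E := AffineMap.lineMap x y
  have hc : ∀ t : ℝ, c t = x + t • (y - x) := by
    intro t; simp [c, AffineMap.lineMap_apply]; abel
  have hgconv : ConvexOn ℝ Set.univ (Φ ∘ c) := by
    have := hconv.comp_affineMap c
    simpa using this
  have hcurve : HasDerivAt (fun t : ℝ => c t) (y - x) 0 := by
    simp_rw [hc]
    have h1 : HasDerivAt (fun t : ℝ => t • (y - x)) (y - x) 0 := by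
      simpa using (hasDerivAt_id (0:ℝ)).smul_const (y - x)
    simpa using h1.const_add x
  have hder : HasDerivAt (Φ ∘ c) (fderiv ℝ Φ x (y - x)) 0 := by
    have h0 : c 0 = x := by simp [hc]
    have h := (hd (c 0)).hasFDerivAt.comp_hasDerivAt 0 hcurve
    rwa [h0] at h
  have hle := hgconv.le_slope_of_hasDerivAt (Set.mem_univ 0)
    (Set.mem_univ 1) one_pos hder
  have hslope : slope (Φ ∘ c) 0 1 = Φ y - Φ x := by
    simp [slope_def_field, hc]
  rw [hslope] at hle
  have hgrad : ⟪gradient Φ x, y - x⟫ = fderiv ℝ Φ x (y - x) := by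
    simp [gradient, InnerProductSpace.toDual_symm_apply]
  linarith [hgrad ▸ hle]

end Aux

/-- Pointwise bound: `Φ_•(∇Φ((1-ε)ξ)) ≤ (1/ε) Φ(ξ)`. -/
lemma youngConj_gradient_scaled_le {n : ℕ} {Φ : EuclideanSpace ℝ (Fin n) → ℝ}
    (hconv : ConvexOn ℝ Set.univ Φ) (hnn : ∀ ζ, 0 ≤ Φ ζ)
    (hd : Differentiable ℝ Φ) {ε : ℝ} (hε0 : 0 < ε) (hε1 : ε ≤ 1)
    (ξ : EuclideanSpace ℝ (Fin n)) :
    youngConj Φ (gradient Φ ((1 - ε) • ξ)) ≤ ENNReal.ofReal ((1 / ε) * Φ ξ) := by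
  set η : EuclideanSpace ℝ (Fin n) := (1 - ε) • ξ with hη
  set g : EuclideanSpace ℝ (Fin n) := gradient Φ η with hg
  have hA : ∀ ζ, ⟪g, ζ - η⟫ ≤ Φ ζ - Φ η := fun ζ => convex_gradient_ineq hconv hd η ζ
  have hξη : ξ - η = ε • ξ := by
    rw [hη]; rw [sub_smul, one_smul]; abel
  have hεP : ε * ⟪g, ξ⟫ ≤ Φ ξ - Φ η := by
    have := hA ξ
    rwa [hξη, real_inner_smul_right] at this
  have hkey : ⟪η, g⟫ - Φ η ≤ (1 / ε) * Φ ξ := by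
    have hηg : ⟪η, g⟫ = (1 - ε) * ⟪g, ξ⟫ := by
      rw [real_inner_comm, hη, real_inner_smul_right]
    have h1 : (1 - ε) * (ε * ⟪g, ξ⟫) ≤ (1 - ε) * (Φ ξ - Φ η) :=
      mul_le_mul_of_nonneg_left hεP (by linarith)
    have hη0 := hnn η
    have hξ0 := hnn ξ
    rw [hηg]
    rw [div_mul_eq_mul_div, le_div_iff₀ hε0]
    nlinarith
  apply iSup_le
  intro ζ
  apply ENNReal.ofReal_le_ofReal
  have := hA ζ
  rw [inner_sub_right] at this
  have hsym : ⟪g, ζ⟫ = ⟪ζ, g⟫ := real_inner_comm ζ g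
  have hsym2 : ⟪g, η⟫ = ⟪η, g⟫ := real_inner_comm η g
  linarith

/-- If `Φ` is a `C¹` `n`-dimensional `N`-function and `U` belongs to the Orlicz
class (`∫_Ω Φ(U) dx < ∞`) on a bounded measurable set `Ω`, then for every
`ε ∈ (0,1]` one has `∫_Ω Φ_•(∇Φ((1−ε)U)) dx < ∞`. -/
theorem conj_gradient_scaled_integrable {n : ℕ}
    (Ω : Set (EuclideanSpace ℝ (Fin n))) (hΩm : MeasurableSet Ω)
    (hΩb : Bornology.IsBounded Ω)
    (Φ : EuclideanSpace ℝ (Fin n) → ℝ) (hΦ : IsNFunction Φ)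
    (hC1 : ContDiff ℝ 1 Φ)
    (U : EuclideanSpace ℝ (Fin n) → EuclideanSpace ℝ (Fin n))
    (hU : Measurable U)
    (hUΦ : ∫⁻ x in Ω, ENNReal.ofReal (Φ (U x)) < ⊤)
    (ε : ℝ) (hε : ε ∈ Set.Ioc (0 : ℝ) 1) :
    ∫⁻ x in Ω, youngConj Φ (gradient Φ ((1 - ε) • U x)) < ⊤ := by
  obtain ⟨hε0, hε1⟩ := hε
  have hd : Differentiable ℝ Φ := hC1.differentiable one_ne_zero
  have hbound : ∀ x, youngConj Φ (gradient Φ ((1 - ε) • U x))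
      ≤ ENNReal.ofReal (1 / ε) * ENNReal.ofReal (Φ (U x)) := by
    intro x
    have h := youngConj_gradient_scaled_le hΦ.convex hΦ.nonneg hd hε0 hε1 (U x)
    rwa [ENNReal.ofReal_mul (by positivity)] at h
  calc ∫⁻ x in Ω, youngConj Φ (gradient Φ ((1 - ε) • U x))
      ≤ ∫⁻ x in Ω, ENNReal.ofReal (1 / ε) * ENNReal.ofReal (Φ (U x)) :=
        lintegral_mono fun x => hbound x
    _ = ENNReal.ofReal (1 / ε) * ∫⁻ x in Ω, ENNReal.ofReal (Φ (U x)) :=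
        lintegral_const_mul' _ _ ENNReal.ofReal_ne_top
    _ < ⊤ := ENNReal.mul_lt_top ENNReal.ofReal_lt_top hUΦ
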